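/- The convergent 60499999499/490050000000 of C₁₀ calculates exactly 187 correct digits of C₁₀ (counting the leading 0): ⌊10^186 · (60499999499/490050000000)⌋ = ⌊10^186 · C₁₀⌋, while ⌊10^187 · (60499999499/490050000000)⌋ = ⌊10^187 · C₁₀⌋ + 1; that is, the digits agree through decimal position 186 and the digit at position 187 (the 8 of the integer 98, immediately preceding the integer 10^2 in the concatenation) is computed as a 9 instead of an 8. -/

import Mathlib

set_option maxRecDepth 40000
set_option maxHeartbeats 2000000

/-- `pos n` is the position in the decimal expansion of Champernowne's constant
of the last digit of the integer `n`. -/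
def pos (n : ℕ) : ℕ := ∑ k ∈ Finset.Icc 1 n, (Nat.digits 10 k).length

/-- Champernowne's constant in base ten. -/
noncomputable def C₁₀ : ℝ := ∑' n : ℕ, ((n + 1 : ℕ) : ℝ) / 10 ^ pos (n + 1)

lemma pos_succ (n : ℕ) : pos (n+1) = pos n + (Nat.digits 10 (n+1)).length :=
  Finset.sum_Icc_succ_top (Nat.le_add_left 1 n) _

lemma p0 : pos 0 = 0 := by simp [pos]
lemma p1 : pos 1 = 1 := by rw [show (1:ℕ) = 0+1 from rfl, pos_succ, p0]; norm_num
lemma p2 : pos 2 = 2 := by rw [show (2:ℕ) = 1+1 from rfl, pos_succ, p1]; norm_num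
lemma p3 : pos 3 = 3 := by rw [show (3:ℕ) = 2+1 from rfl, pos_succ, p2]; norm_num
lemma p4 : pos 4 = 4 := by rw [show (4:ℕ) = 3+1 from rfl, pos_succ, p3]; norm_num
lemma p5 : pos 5 = 5 := by rw [show (5:ℕ) = 4+1 from rfl, pos_succ, p4]; norm_num
lemma p6 : pos 6 = 6 := by rw [show (6:ℕ) = 5+1 from rfl, pos_succ, p5]; norm_num
lemma p7 : pos 7 = 7 := by rw [show (7:ℕ) = 6+1 from rfl, pos_succ, p6]; norm_num
lemma p8 : pos 8 = 8 := by rw [show (8:ℕ) = 7+1 from rfl, pos_succ, p7]; norm_num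
lemma p9 : pos 9 = 9 := by rw [show (9:ℕ) = 8+1 from rfl, pos_succ, p8]; norm_num
lemma p10 : pos 10 = 11 := by rw [show (10:ℕ) = 9+1 from rfl, pos_succ, p9]; norm_num
lemma p11 : pos 11 = 13 := by rw [show (11:ℕ) = 10+1 from rfl, pos_succ, p10]; norm_num
lemma p12 : pos 12 = 15 := by rw [show (12:ℕ) = 11+1 from rfl, pos_succ, p11]; norm_num
lemma p13 : pos 13 = 17 := by rw [show (13:ℕ) = 12+1 from rfl, pos_succ, p12]; norm_num
lemma p14 : pos 14 = 19 := by rw [show (14:ℕ) = 13+1 from rfl, pos_succ, p13]; norm_num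
lemma p15 : pos 15 = 21 := by rw [show (15:ℕ) = 14+1 from rfl, pos_succ, p14]; norm_num
lemma p16 : pos 16 = 23 := by rw [show (16:ℕ) = 15+1 from rfl, pos_succ, p15]; norm_num
lemma p17 : pos 17 = 25 := by rw [show (17:ℕ) = 16+1 from rfl, pos_succ, p16]; norm_num
lemma p18 : pos 18 = 27 := by rw [show (18:ℕ) = 17+1 from rfl, pos_succ, p17]; norm_num
lemma p19 : pos 19 = 29 := by rw [show (19:ℕ) = 18+1 from rfl, pos_succ, p18]; norm_num
lemma p20 : pos 20 = 31 := by rw [show (20:ℕ) = 19+1 from rfl, pos_succ, p19]; norm_num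
lemma p21 : pos 21 = 33 := by rw [show (21:ℕ) = 20+1 from rfl, pos_succ, p20]; norm_num
lemma p22 : pos 22 = 35 := by rw [show (22:ℕ) = 21+1 from rfl, pos_succ, p21]; norm_num
lemma p23 : pos 23 = 37 := by rw [show (23:ℕ) = 22+1 from rfl, pos_succ, p22]; norm_num
lemma p24 : pos 24 = 39 := by rw [show (24:ℕ) = 23+1 from rfl, pos_succ, p23]; norm_num
lemma p25 : pos 25 = 41 := by rw [show (25:ℕ) = 24+1 from rfl, pos_succ, p24]; norm_num
lemma p26 : pos 26 = 43 := by rw [show (26:ℕ) = 25+1 from rfl, pos_succ, p25]; norm_num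
lemma p27 : pos 27 = 45 := by rw [show (27:ℕ) = 26+1 from rfl, pos_succ, p26]; norm_num
lemma p28 : pos 28 = 47 := by rw [show (28:ℕ) = 27+1 from rfl, pos_succ, p27]; norm_num
lemma p29 : pos 29 = 49 := by rw [show (29:ℕ) = 28+1 from rfl, pos_succ, p28]; norm_num
lemma p30 : pos 30 = 51 := by rw [show (30:ℕ) = 29+1 from rfl, pos_succ, p29]; norm_num
lemma p31 : pos 31 = 53 := by rw [show (31:ℕ) = 30+1 from rfl, pos_succ, p30]; norm_num
lemma p32 : pos 32 = 55 := by rw [show (32:ℕ) = 31+1 from rfl, pos_succ, p31]; norm_num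
lemma p33 : pos 33 = 57 := by rw [show (33:ℕ) = 32+1 from rfl, pos_succ, p32]; norm_num
lemma p34 : pos 34 = 59 := by rw [show (34:ℕ) = 33+1 from rfl, pos_succ, p33]; norm_num
lemma p35 : pos 35 = 61 := by rw [show (35:ℕ) = 34+1 from rfl, pos_succ, p34]; norm_num
lemma p36 : pos 36 = 63 := by rw [show (36:ℕ) = 35+1 from rfl, pos_succ, p35]; norm_num
lemma p37 : pos 37 = 65 := by rw [show (37:ℕ) = 36+1 from rfl, pos_succ, p36]; norm_num
lemma p38 : pos 38 = 67 := by rw [show (38:ℕ) = 37+1 from rfl, pos_succ, p37]; norm_num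
lemma p39 : pos 39 = 69 := by rw [show (39:ℕ) = 38+1 from rfl, pos_succ, p38]; norm_num
lemma p40 : pos 40 = 71 := by rw [show (40:ℕ) = 39+1 from rfl, pos_succ, p39]; norm_num
lemma p41 : pos 41 = 73 := by rw [show (41:ℕ) = 40+1 from rfl, pos_succ, p40]; norm_num
lemma p42 : pos 42 = 75 := by rw [show (42:ℕ) = 41+1 from rfl, pos_succ, p41]; norm_num
lemma p43 : pos 43 = 77 := by rw [show (43:ℕ) = 42+1 from rfl, pos_succ, p42]; norm_num
lemma p44 : pos 44 = 79 := by rw [show (44:ℕ) = 43+1 from rfl, pos_succ, p43]; norm_num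
lemma p45 : pos 45 = 81 := by rw [show (45:ℕ) = 44+1 from rfl, pos_succ, p44]; norm_num
lemma p46 : pos 46 = 83 := by rw [show (46:ℕ) = 45+1 from rfl, pos_succ, p45]; norm_num
lemma p47 : pos 47 = 85 := by rw [show (47:ℕ) = 46+1 from rfl, pos_succ, p46]; norm_num
lemma p48 : pos 48 = 87 := by rw [show (48:ℕ) = 47+1 from rfl, pos_succ, p47]; norm_num
lemma p49 : pos 49 = 89 := by rw [show (49:ℕ) = 48+1 from rfl, pos_succ, p48]; norm_num
lemma p50 : pos 50 = 91 := by rw [show (50:ℕ) = 49+1 from rfl, pos_succ, p49]; norm_num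
lemma p51 : pos 51 = 93 := by rw [show (51:ℕ) = 50+1 from rfl, pos_succ, p50]; norm_num
lemma p52 : pos 52 = 95 := by rw [show (52:ℕ) = 51+1 from rfl, pos_succ, p51]; norm_num
lemma p53 : pos 53 = 97 := by rw [show (53:ℕ) = 52+1 from rfl, pos_succ, p52]; norm_num
lemma p54 : pos 54 = 99 := by rw [show (54:ℕ) = 53+1 from rfl, pos_succ, p53]; norm_num
lemma p55 : pos 55 = 101 := by rw [show (55:ℕ) = 54+1 from rfl, pos_succ, p54]; norm_num
lemma p56 : pos 56 = 103 := by rw [show (56:ℕ) = 55+1 from rfl, pos_succ, p55]; norm_num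
lemma p57 : pos 57 = 105 := by rw [show (57:ℕ) = 56+1 from rfl, pos_succ, p56]; norm_num
lemma p58 : pos 58 = 107 := by rw [show (58:ℕ) = 57+1 from rfl, pos_succ, p57]; norm_num
lemma p59 : pos 59 = 109 := by rw [show (59:ℕ) = 58+1 from rfl, pos_succ, p58]; norm_num
lemma p60 : pos 60 = 111 := by rw [show (60:ℕ) = 59+1 from rfl, pos_succ, p59]; norm_num
lemma p61 : pos 61 = 113 := by rw [show (61:ℕ) = 60+1 from rfl, pos_succ, p60]; norm_num
lemma p62 : pos 62 = 115 := by rw [show (62:ℕ) = 61+1 from rfl, pos_succ, p61]; norm_num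
lemma p63 : pos 63 = 117 := by rw [show (63:ℕ) = 62+1 from rfl, pos_succ, p62]; norm_num
lemma p64 : pos 64 = 119 := by rw [show (64:ℕ) = 63+1 from rfl, pos_succ, p63]; norm_num
lemma p65 : pos 65 = 121 := by rw [show (65:ℕ) = 64+1 from rfl, pos_succ, p64]; norm_num
lemma p66 : pos 66 = 123 := by rw [show (66:ℕ) = 65+1 from rfl, pos_succ, p65]; norm_num
lemma p67 : pos 67 = 125 := by rw [show (67:ℕ) = 66+1 from rfl, pos_succ, p66]; norm_num
lemma p68 : pos 68 = 127 := by rw [show (68:ℕ) = 67+1 from rfl, pos_succ, p67]; norm_num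
lemma p69 : pos 69 = 129 := by rw [show (69:ℕ) = 68+1 from rfl, pos_succ, p68]; norm_num
lemma p70 : pos 70 = 131 := by rw [show (70:ℕ) = 69+1 from rfl, pos_succ, p69]; norm_num
lemma p71 : pos 71 = 133 := by rw [show (71:ℕ) = 70+1 from rfl, pos_succ, p70]; norm_num
lemma p72 : pos 72 = 135 := by rw [show (72:ℕ) = 71+1 from rfl, pos_succ, p71]; norm_num
lemma p73 : pos 73 = 137 := by rw [show (73:ℕ) = 72+1 from rfl, pos_succ, p72]; norm_num
lemma p74 : pos 74 = 139 := by rw [show (74:ℕ) = 73+1 from rfl, pos_succ, p73]; norm_num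
lemma p75 : pos 75 = 141 := by rw [show (75:ℕ) = 74+1 from rfl, pos_succ, p74]; norm_num
lemma p76 : pos 76 = 143 := by rw [show (76:ℕ) = 75+1 from rfl, pos_succ, p75]; norm_num
lemma p77 : pos 77 = 145 := by rw [show (77:ℕ) = 76+1 from rfl, pos_succ, p76]; norm_num
lemma p78 : pos 78 = 147 := by rw [show (78:ℕ) = 77+1 from rfl, pos_succ, p77]; norm_num
lemma p79 : pos 79 = 149 := by rw [show (79:ℕ) = 78+1 from rfl, pos_succ, p78]; norm_num
lemma p80 : pos 80 = 151 := by rw [show (80:ℕ) = 79+1 from rfl, pos_succ, p79]; norm_num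
lemma p81 : pos 81 = 153 := by rw [show (81:ℕ) = 80+1 from rfl, pos_succ, p80]; norm_num
lemma p82 : pos 82 = 155 := by rw [show (82:ℕ) = 81+1 from rfl, pos_succ, p81]; norm_num
lemma p83 : pos 83 = 157 := by rw [show (83:ℕ) = 82+1 from rfl, pos_succ, p82]; norm_num
lemma p84 : pos 84 = 159 := by rw [show (84:ℕ) = 83+1 from rfl, pos_succ, p83]; norm_num
lemma p85 : pos 85 = 161 := by rw [show (85:ℕ) = 84+1 from rfl, pos_succ, p84]; norm_num
lemma p86 : pos 86 = 163 := by rw [show (86:ℕ) = 85+1 from rfl, pos_succ, p85]; norm_num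
lemma p87 : pos 87 = 165 := by rw [show (87:ℕ) = 86+1 from rfl, pos_succ, p86]; norm_num
lemma p88 : pos 88 = 167 := by rw [show (88:ℕ) = 87+1 from rfl, pos_succ, p87]; norm_num
lemma p89 : pos 89 = 169 := by rw [show (89:ℕ) = 88+1 from rfl, pos_succ, p88]; norm_num
lemma p90 : pos 90 = 171 := by rw [show (90:ℕ) = 89+1 from rfl, pos_succ, p89]; norm_num
lemma p91 : pos 91 = 173 := by rw [show (91:ℕ) = 90+1 from rfl, pos_succ, p90]; norm_num
lemma p92 : pos 92 = 175 := by rw [show (92:ℕ) = 91+1 from rfl, pos_succ, p91]; norm_num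
lemma p93 : pos 93 = 177 := by rw [show (93:ℕ) = 92+1 from rfl, pos_succ, p92]; norm_num
lemma p94 : pos 94 = 179 := by rw [show (94:ℕ) = 93+1 from rfl, pos_succ, p93]; norm_num
lemma p95 : pos 95 = 181 := by rw [show (95:ℕ) = 94+1 from rfl, pos_succ, p94]; norm_num
lemma p96 : pos 96 = 183 := by rw [show (96:ℕ) = 95+1 from rfl, pos_succ, p95]; norm_num
lemma p97 : pos 97 = 185 := by rw [show (97:ℕ) = 96+1 from rfl, pos_succ, p96]; norm_num
lemma p98 : pos 98 = 187 := by rw [show (98:ℕ) = 97+1 from rfl, pos_succ, p97]; norm_num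
lemma p99 : pos 99 = 189 := by rw [show (99:ℕ) = 98+1 from rfl, pos_succ, p98]; norm_num

lemma len_ge (m : ℕ) (h : 100 ≤ m) : 3 ≤ (Nat.digits 10 m).length := by
  calc 3 = (Nat.digits 10 100).length := by norm_num
  _ ≤ (Nat.digits 10 m).length := Nat.le_digits_len_le 10 100 m h

lemma pos_ge (n : ℕ) : 192 + 3 * n ≤ pos (100 + n) := by
  induction n with
  | zero =>
    have h : pos 100 = pos 99 + (Nat.digits 10 100).length := pos_succ 99
    rw [h, p99]; norm_num
  | succ k ih =>
    have h1 : pos (100 + (k+1)) = pos (100 + k) + (Nat.digits 10 (100 + k + 1)).length := by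
      rw [show 100 + (k+1) = (100 + k) + 1 from rfl]; exact pos_succ _
    have h2 := len_ge (100 + k + 1) (by omega)
    omega

lemma pos_le' (n : ℕ) : n ≤ pos n := by
  calc n = ∑ k ∈ Finset.Icc 1 n, 1 := by simp
  _ ≤ pos n := by
    apply Finset.sum_le_sum
    intro k hk
    simp only [Finset.mem_Icc] at hk
    have : Nat.digits 10 k ≠ [] := Nat.digits_ne_nil_iff_ne_zero.2 (by omega)
    exact List.length_pos_iff.2 this

lemma nat_le_pow (n : ℕ) : n + 1 ≤ 10 * 2 ^ n := by
  have h := Nat.lt_two_pow_self (n := n)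
  have h2 : 1 ≤ 2 ^ n := Nat.one_le_two_pow
  calc n + 1 ≤ 2 ^ n + 1 := by omega
  _ ≤ 10 * 2 ^ n := by omega

lemma f_le (n : ℕ) : ((n + 1 : ℕ) : ℝ) / 10 ^ pos (n + 1) ≤ (1/5 : ℝ) ^ n := by
  have h1 : ((n + 1 : ℕ) : ℝ) ≤ 10 * 2 ^ n := by exact_mod_cast nat_le_pow n
  calc ((n + 1 : ℕ) : ℝ) / 10 ^ pos (n + 1) ≤ (10 * 2 ^ n) / 10 ^ (n + 1) := by
        gcongr
        · norm_num
        · exact pos_le' (n+1)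
  _ = (1/5 : ℝ) ^ n := by
        rw [show ((1:ℝ)/5) ^ n = 1 / 5 ^ n by rw [div_pow, one_pow], pow_succ,
          show (10:ℝ) ^ n = 2 ^ n * 5 ^ n by rw [← mul_pow]; norm_num]
        field_simp

lemma hsum : Summable (fun n : ℕ => ((n + 1 : ℕ) : ℝ) / 10 ^ pos (n + 1)) := by
  apply Summable.of_nonneg_of_le (fun n => by positivity) f_le
  exact summable_geometric_of_lt_one (by norm_num) (by norm_num)

lemma tail_le (n : ℕ) : ((n + 99 + 1 : ℕ) : ℝ) / 10 ^ pos (n + 99 + 1) ≤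
    (1 / 10 ^ 190 : ℝ) * (1/500) ^ n := by
  have hp : 192 + 3 * n ≤ pos (n + 99 + 1) := by
    have := pos_ge n
    rwa [show 100 + n = n + 99 + 1 by ring] at this
  have h1 : ((n + 99 + 1 : ℕ) : ℝ) ≤ 100 * 2 ^ n := by
    have h := Nat.lt_two_pow_self (n := n)
    have h2 : 1 ≤ 2 ^ n := Nat.one_le_two_pow
    have : n + 99 + 1 ≤ 100 * 2 ^ n := by
      calc n + 99 + 1 ≤ 2 ^ n + 99 * 2 ^ n := by omega
      _ = 100 * 2 ^ n := by ring
    exact_mod_cast this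
  calc ((n + 99 + 1 : ℕ) : ℝ) / 10 ^ pos (n + 99 + 1)
      ≤ (100 * 2 ^ n) / 10 ^ (192 + 3 * n) := by
        gcongr <;> norm_num [hp]
  _ = (1 / 10 ^ 190 : ℝ) * (1/500) ^ n := by
        rw [show ((1:ℝ)/500) ^ n = 1 / 500 ^ n by rw [div_pow, one_pow], pow_add, pow_mul,
          show ((10:ℝ) ^ 3) ^ n = 2 ^ n * 500 ^ n by rw [← mul_pow]; norm_num]
        field_simp
        ring

lemma tail_bound : ∑' n : ℕ, ((n + 99 + 1 : ℕ) : ℝ) / 10 ^ pos (n + 99 + 1) ≤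
    (1 / 10 ^ 190 : ℝ) * (500 / 499) := by
  have hg : Summable (fun n : ℕ => (1 / 10 ^ 190 : ℝ) * (1/500) ^ n) :=
    (summable_geometric_of_lt_one (by norm_num) (by norm_num)).mul_left _
  have hf : Summable (fun n : ℕ => ((n + 99 + 1 : ℕ) : ℝ) / 10 ^ pos (n + 99 + 1)) := by
    have h := (summable_nat_add_iff (f := fun n : ℕ => ((n + 1 : ℕ) : ℝ) / 10 ^ pos (n + 1)) 99).2 hsum
    exact h
  calc ∑' n : ℕ, ((n + 99 + 1 : ℕ) : ℝ) / 10 ^ pos (n + 99 + 1)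
      ≤ ∑' n : ℕ, (1 / 10 ^ 190 : ℝ) * (1/500) ^ n := Summable.tsum_le_tsum tail_le hf hg
  _ = (1 / 10 ^ 190 : ℝ) * ∑' n : ℕ, ((1:ℝ)/500) ^ n := tsum_mul_left
  _ = (1 / 10 ^ 190 : ℝ) * (1 - 1/500)⁻¹ := by
        rw [tsum_geometric_of_lt_one (by norm_num) (by norm_num)]
  _ = (1 / 10 ^ 190 : ℝ) * (500 / 499) := by norm_num

lemma hC_split : C₁₀ = ∑ i ∈ Finset.range 99, ((i + 1 : ℕ) : ℝ) / 10 ^ pos (i + 1)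
    + ∑' n : ℕ, ((n + 99 + 1 : ℕ) : ℝ) / 10 ^ pos (n + 99 + 1) := by
  rw [C₁₀, ← Summable.sum_add_tsum_nat_add 99 hsum]

lemma hS : ∑ i ∈ Finset.range 99, ((i + 1 : ℕ) : ℝ) / 10 ^ pos (i + 1)
    = (123456789101112131415161718192021222324252627282930313233343536373839404142434445464748495051525354555657585960616263646566676869707172737475767778798081828384858687888990919293949596979899 : ℝ) / 10 ^ 189 := by
  norm_num [Finset.sum_range_succ, p1, p2, p3, p4, p5, p6, p7, p8, p9, p10, p11, p12, p13, p14, p15, p16, p17, p18, p19, p20, p21, p22, p23, p24, p25, p26, p27, p28, p29, p30, p31, p32, p33, p34, p35, p36, p37, p38, p39, p40, p41, p42, p43, p44, p45, p46, p47, p48, p49, p50, p51, p52, p53, p54, p55, p56, p57, p58, p59, p60, p61, p62, p63, p64, p65, p66, p67, p68, p69, p70, p71, p72, p73, p74, p75, p76, p77, p78, p79, p80, p81, p82, p83, p84, p85, p86, p87, p88, p89, p90, p91, p92, p93, p94, p95, p96, p97, p98, p99]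

theorem hwm5_convergent_correct_digits :
    ⌊(10 : ℝ) ^ (186 : ℕ) * (60499999499 / 490050000000)⌋ = ⌊(10 : ℝ) ^ (186 : ℕ) * C₁₀⌋ ∧
    ⌊(10 : ℝ) ^ (187 : ℕ) * (60499999499 / 490050000000)⌋ = ⌊(10 : ℝ) ^ (187 : ℕ) * C₁₀⌋ + 1 := by
  set T := ∑' n : ℕ, ((n + 99 + 1 : ℕ) : ℝ) / 10 ^ pos (n + 99 + 1) with hT
  have hT0 : 0 ≤ T := tsum_nonneg (fun n => by positivity)
  have hT1 : T ≤ (1 / 10 ^ 190 : ℝ) * (500 / 499) := tail_bound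
  have hC : C₁₀ = (123456789101112131415161718192021222324252627282930313233343536373839404142434445464748495051525354555657585960616263646566676869707172737475767778798081828384858687888990919293949596979899 : ℝ) / 10 ^ 189 + T := by rw [hC_split, hS]
  have hq1 : ⌊(10 : ℝ) ^ (186 : ℕ) * (60499999499 / 490050000000)⌋ = (123456789101112131415161718192021222324252627282930313233343536373839404142434445464748495051525354555657585960616263646566676869707172737475767778798081828384858687888990919293949596979 : ℤ) := by
    rw [Int.floor_eq_iff]
    constructor <;> push_cast <;> norm_num
  have hq2 : ⌊(10 : ℝ) ^ (187 : ℕ) * (60499999499 / 490050000000)⌋ = (1234567891011121314151617181920212223242526272829303132333435363738394041424344454647484950515253545556575859606162636465666768697071727374757677787980818283848586878889909192939495969799 : ℤ) := by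
    rw [Int.floor_eq_iff]
    constructor <;> push_cast <;> norm_num
  have hc1 : ⌊(10 : ℝ) ^ (186 : ℕ) * C₁₀⌋ = (123456789101112131415161718192021222324252627282930313233343536373839404142434445464748495051525354555657585960616263646566676869707172737475767778798081828384858687888990919293949596979 : ℤ) := by
    rw [Int.floor_eq_iff, hC]
    constructor <;> push_cast <;> nlinarith [hT0, hT1]
  have hc2 : ⌊(10 : ℝ) ^ (187 : ℕ) * C₁₀⌋ = (1234567891011121314151617181920212223242526272829303132333435363738394041424344454647484950515253545556575859606162636465666768697071727374757677787980818283848586878889909192939495969798 : ℤ) := by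
    rw [Int.floor_eq_iff, hC]
    constructor <;> push_cast <;> nlinarith [hT0, hT1]
  exact ⟨by rw [hq1, hc1], by rw [hq2, hc2]; norm_num⟩
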